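/- Let H be a complex Hilbert space, A a bounded operator on H, and B a densely defined operator on H. If A*(H) ⊆ D(B*), then the operator AB : D(B) → H is bounded. -/

import Mathlib

open scoped InnerProductSpace

/-- If `A` is bounded, `B` densely defined and `A*(H) ⊆ D(B*)`, then the operator
`A ∘ B : D(B) → H` is bounded. -/
theorem stmt1
    {H : Type*} [NormedAddCommGroup H] [InnerProductSpace ℂ H] [CompleteSpace H]
    (A : H →L[ℂ] H) (B : H →ₗ.[ℂ] H) (hB : Dense (B.domain : Set H))
    (hran : ∀ v : H, (ContinuousLinearMap.adjoint A) v ∈ B.adjoint.domain) :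
    ∃ C : ℝ, ∀ w : B.domain, ‖A (B w)‖ ≤ C * ‖(w : H)‖ := by
  classical
  -- Define T v = B† (A† v)
  let T : H →ₗ[ℂ] H :=
    { toFun := fun v => B.adjoint ⟨ContinuousLinearMap.adjoint A v, hran v⟩
      map_add' := fun v w => by
        have : (⟨ContinuousLinearMap.adjoint A (v + w), hran (v+w)⟩ :
            B.adjoint.domain) = ⟨ContinuousLinearMap.adjoint A v, hran v⟩ +
            ⟨ContinuousLinearMap.adjoint A w, hran w⟩ := by ext; simp
        show B.adjoint _ = B.adjoint _ + B.adjoint _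
        rw [this, B.adjoint.map_add]
      map_smul' := fun c v => by
        have : (⟨ContinuousLinearMap.adjoint A (c • v), hran (c • v)⟩ :
            B.adjoint.domain) = c • ⟨ContinuousLinearMap.adjoint A v, hran v⟩ := by ext; simp
        show B.adjoint _ = c • B.adjoint _
        rw [this, B.adjoint.map_smul] }
  have hform := LinearPMap.adjoint_isFormalAdjoint hB
  -- key identity
  have key : ∀ (v : H) (w : B.domain), ⟪T v, (w : H)⟫_ℂ = ⟪v, A (B w)⟫_ℂ := by
    intro v w
    have h1 : ⟪T v, (w : H)⟫_ℂ = ⟪ContinuousLinearMap.adjoint A v, B w⟫_ℂ :=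
      hform ⟨ContinuousLinearMap.adjoint A v, hran v⟩ w
    rw [h1, ContinuousLinearMap.adjoint_inner_left]
  -- T is continuous via closed graph theorem
  have hTcont : Continuous T := by
    apply T.continuous_of_seq_closed_graph
    intro u x y hx hy
    refine hB.eq_of_inner_left ℂ ((Subtype.forall (p := fun v => v ∈ B.domain)
      (q := fun w => ⟪y, (w : H)⟫_ℂ = ⟪T x, (w : H)⟫_ℂ)).mp fun w => ?_)
    have h1 : Filter.Tendsto (fun n => ⟪T (u n), (w : H)⟫_ℂ) Filter.atTop
        (nhds ⟪y, (w : H)⟫_ℂ) :=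
      (Filter.Tendsto.inner hy tendsto_const_nhds)
    have h2 : Filter.Tendsto (fun n => ⟪T (u n), (w : H)⟫_ℂ) Filter.atTop
        (nhds ⟪T x, (w : H)⟫_ℂ) := by
      simp only [key]
      exact Filter.Tendsto.inner hx tendsto_const_nhds
    exact tendsto_nhds_unique h1 h2
  let Tc : H →L[ℂ] H := ⟨T, hTcont⟩
  refine ⟨‖Tc‖, fun w => ?_⟩
  have h0 : ‖A (B w)‖ * ‖A (B w)‖ ≤ (‖Tc‖ * ‖(w : H)‖) * ‖A (B w)‖ := by
    have := key (A (B w)) w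
    calc ‖A (B w)‖ * ‖A (B w)‖ = ‖(⟪A (B w), A (B w)⟫_ℂ : ℂ)‖ := by
          rw [inner_self_eq_norm_sq_to_K]; simp [sq]
      _ = ‖(⟪T (A (B w)), (w : H)⟫_ℂ : ℂ)‖ := by rw [this]
      _ ≤ ‖T (A (B w))‖ * ‖(w : H)‖ := norm_inner_le_norm _ _
      _ ≤ (‖Tc‖ * ‖A (B w)‖) * ‖(w : H)‖ := by
          gcongr
          exact Tc.le_opNorm _
      _ = (‖Tc‖ * ‖(w : H)‖) * ‖A (B w)‖ := by ring
  rcases eq_or_lt_of_le (norm_nonneg (A (B w))) with h | h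
  · rw [← h]
    positivity
  · exact le_of_mul_le_mul_right h0 h
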